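/- arXiv:1507.02666 — 3 statements merged into one kernel-verified Lean document; each statement's English description precedes it below -/
import Mathlib

section
/- Let f(a,z) = Σ_{n≥1} f_n(a) z^n and g(a,w) = Σ_{n≥1} g_n(a) w^n be formal power series over ℂ[a] with zero constant terms, such that f_1 and g_1 are nonzero constants. Suppose f is essentially quadratic (deg f_2 = 1 and deg f_n < n−1 for all n > 2) and g is sub-quadratic (deg g_n < n−1 for all n ≥ 2). Then the composition h(a,z) = g(a,f(a,z)) is essentially quadratic: its coefficient h_2 has degree exactly 1 and deg h_m < m−1 for all m > 2. -/
open Polynomial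

/-- The `m`-th coefficient of the formal composition `g(a, f(a,z))` of power series
over `ℂ[a]` with zero constant terms. -/
noncomputable def compCoeff (f g : ℕ → Polynomial ℂ) (m : ℕ) : Polynomial ℂ :=
  ∑ n ∈ Finset.range (m + 1),
    g n * PowerSeries.coeff (R := Polynomial ℂ) m ((PowerSeries.mk f) ^ n)

lemma wb1 (d : WithBot ℕ) (a : ℕ) (h : d < (a : WithBot ℕ)) : d + 1 ≤ (a : WithBot ℕ) := by
  simp only [Nat.cast_withBot, Nat.cast_id] at h ⊢
  induction d using WithBot.recBotCoe with
  | bot => simp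
  | coe d =>
    have hd : d < a := by exact_mod_cast h
    rw [← WithBot.coe_one, ← WithBot.coe_add, WithBot.coe_le_coe]
    omega

lemma wb2 (d : WithBot ℕ) (k m : ℕ) (h : d + (k : WithBot ℕ) ≤ (m : WithBot ℕ)) :
    d ≤ ((m - k : ℕ) : WithBot ℕ) := by
  simp only [Nat.cast_withBot, Nat.cast_id] at h ⊢
  induction d using WithBot.recBotCoe with
  | bot => simp
  | coe d =>
    have h2 : d + k ≤ m := by exact_mod_cast h
    exact_mod_cast Nat.le_sub_of_add_le h2

lemma sup_add_le {α : Type*} {s : Finset α} {F : α → WithBot ℕ} {c : ℕ} {m : WithBot ℕ}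
    (h : ∀ p ∈ s, F p + (c : WithBot ℕ) ≤ m) : s.sup F + (c : WithBot ℕ) ≤ m := by
  rcases s.eq_empty_or_nonempty with rfl | hs
  · simp
  · obtain ⟨p, hp, hsup⟩ := Finset.exists_mem_eq_sup s hs F
    rw [hsup]; exact h p hp

/-- If `f(a,z) = Σ_{n≥1} f_n(a) z^n` is essentially quadratic
(`deg f_2 = 1`, `deg f_n < n-1` for `n > 2`) and `g(a,w) = Σ_{n≥1} g_n(a) w^n` is
sub-quadratic (`deg g_n < n-1` for `n ≥ 2`), with `f_1, g_1` nonzero constants,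
then the composition `h(a,z) = g(a, f(a,z))` is essentially quadratic:
`deg h_2 = 1` and `deg h_m < m-1` for `m > 2`. -/
theorem composition_essentially_quadratic_of_subquadratic_outer
    (f g : ℕ → Polynomial ℂ) (hf0 : f 0 = 0) (hg0 : g 0 = 0)
    (c₁ c₂ : ℂ) (hc₁ : c₁ ≠ 0) (hf1 : f 1 = C c₁)
    (hc₂ : c₂ ≠ 0) (hg1 : g 1 = C c₂)
    (hf2 : (f 2).degree = 1)
    (hfn : ∀ n : ℕ, 2 < n → (f n).degree < ((n - 1 : ℕ) : WithBot ℕ))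
    (hgn : ∀ n : ℕ, 2 ≤ n → (g n).degree < ((n - 1 : ℕ) : WithBot ℕ)) :
    (compCoeff f g 2).degree = 1 ∧
      ∀ m : ℕ, 2 < m → (compCoeff f g m).degree < ((m - 1 : ℕ) : WithBot ℕ) := by
  -- basic degree bound: deg f_k + 1 ≤ k
  have hA : ∀ k : ℕ, (f k).degree + 1 ≤ (k : WithBot ℕ) := by
    intro k
    match k with
    | 0 => simp [hf0]
    | 1 => rw [hf1, degree_C hc₁]; exact le_refl _
    | 2 => rw [hf2]; decide
    | (n+3) =>
      have h1 : (f (n+3)).degree + 1 ≤ ((n+2 : ℕ) : WithBot ℕ) := by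
        have := hfn (n+3) (by omega)
        simpa using wb1 _ _ this
      refine h1.trans ?_
      exact_mod_cast Nat.le_succ (n+2)
  -- degree bound on coefficients of powers
  have hB : ∀ n m : ℕ,
      ((PowerSeries.coeff (R := Polynomial ℂ) m ((PowerSeries.mk f) ^ n)).degree
        + (n : WithBot ℕ)) ≤ (m : WithBot ℕ) := by
    intro n
    induction n with
    | zero =>
      intro m
      rcases m with _ | m
      · simp
      · simp [PowerSeries.coeff_one]
    | succ n ih =>
      intro m
      rw [pow_succ', PowerSeries.coeff_mul]
      have hcast : ((n+1 : ℕ) : WithBot ℕ) = (n : WithBot ℕ) + 1 := by push_cast; ring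
      refine (add_le_add_left (Polynomial.degree_sum_le _ _) _).trans ?_
      rw [hcast]
      have := sup_add_le (s := Finset.HasAntidiagonal.antidiagonal m)
        (F := fun p => (PowerSeries.coeff (R := Polynomial ℂ) p.1 (PowerSeries.mk f)
          * PowerSeries.coeff (R := Polynomial ℂ) p.2 ((PowerSeries.mk f) ^ n)).degree)
        (c := n + 1) (m := (m : WithBot ℕ)) ?_
      · rw [hcast] at this; exact this
      · intro p hp
        have hpm : p.1 + p.2 = m := Finset.HasAntidiagonal.mem_antidiagonal.mp hp
        have hmul : (PowerSeries.coeff (R := Polynomial ℂ) p.1 (PowerSeries.mk f)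
            * PowerSeries.coeff (R := Polynomial ℂ) p.2 ((PowerSeries.mk f) ^ n)).degree
            ≤ (f p.1).degree
              + (PowerSeries.coeff (R := Polynomial ℂ) p.2 ((PowerSeries.mk f) ^ n)).degree := by
          rw [PowerSeries.coeff_mk]
          exact Polynomial.degree_mul_le _ _
        calc (PowerSeries.coeff (R := Polynomial ℂ) p.1 (PowerSeries.mk f)
            * PowerSeries.coeff (R := Polynomial ℂ) p.2 ((PowerSeries.mk f) ^ n)).degree
              + ((n + 1 : ℕ) : WithBot ℕ)
            ≤ ((f p.1).degree
              + (PowerSeries.coeff (R := Polynomial ℂ) p.2 ((PowerSeries.mk f) ^ n)).degree)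
              + ((n + 1 : ℕ) : WithBot ℕ) := add_le_add_left hmul _
          _ = ((f p.1).degree + 1)
              + ((PowerSeries.coeff (R := Polynomial ℂ) p.2 ((PowerSeries.mk f) ^ n)).degree
                + (n : WithBot ℕ)) := by rw [hcast]; abel
          _ ≤ ((p.1 : WithBot ℕ)) + ((p.2 : WithBot ℕ)) := add_le_add (hA p.1) (ih p.2)
          _ = (m : WithBot ℕ) := by exact_mod_cast congrArg (Nat.cast : ℕ → WithBot ℕ) hpm
  constructor
  · -- m = 2 case
    have hc22 : (PowerSeries.coeff (R := Polynomial ℂ) 2 ((PowerSeries.mk f) ^ 2)).degree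
        ≤ ((0 : ℕ) : WithBot ℕ) := by
      have := hB 2 2
      simpa using wb2 _ 2 2 this
    have hsum : compCoeff f g 2
        = C c₂ * f 2 + g 2 * PowerSeries.coeff (R := Polynomial ℂ) 2 ((PowerSeries.mk f) ^ 2) := by
      simp [compCoeff, Finset.sum_range_succ, hg0, hg1, PowerSeries.coeff_mk]
    rw [hsum]
    have hdeg1 : (C c₂ * f 2).degree = 1 := by
      rw [degree_mul, degree_C hc₂, hf2]; rfl
    have hlt : (g 2 * PowerSeries.coeff (R := Polynomial ℂ) 2 ((PowerSeries.mk f) ^ 2)).degree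
        < (C c₂ * f 2).degree := by
      rw [hdeg1]
      have hg2 : (g 2).degree ≤ ((0:ℕ) : WithBot ℕ) := by
        have := hgn 2 (by omega)
        have h1 := wb1 _ _ this
        simpa using wb2 _ 1 1 (by simpa using h1)
      calc (g 2 * _).degree ≤ (g 2).degree + _ := Polynomial.degree_mul_le _ _
        _ ≤ ((0:ℕ) : WithBot ℕ) + ((0:ℕ) : WithBot ℕ) := add_le_add hg2 hc22
        _ < 1 := by decide
    rw [degree_add_eq_left_of_degree_lt hlt, hdeg1]
  · -- m > 2 case
    intro m hm
    have key : ∀ n ∈ Finset.range (m + 1),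
        (g n * PowerSeries.coeff (R := Polynomial ℂ) m ((PowerSeries.mk f) ^ n)).degree
          ≤ ((m - 2 : ℕ) : WithBot ℕ) := by
      intro n _
      match n with
      | 0 => simp [hg0]
      | 1 =>
        rw [pow_one, PowerSeries.coeff_mk, hg1]
        have hfm : (f m).degree ≤ ((m - 2 : ℕ) : WithBot ℕ) := by
          have := hfn m hm
          have h1 := wb1 _ _ this
          have h2 := wb2 _ 1 (m-1) (by simpa using h1)
          have : m - 1 - 1 = m - 2 := by omega
          rwa [this] at h2
        calc (C c₂ * f m).degree ≤ (C c₂).degree + (f m).degree := degree_mul_le _ _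
          _ = (f m).degree := by rw [degree_C hc₂, zero_add]
          _ ≤ _ := hfm
      | (n+2) =>
        have hg2 : (g (n+2)).degree + ((2:ℕ) : WithBot ℕ) ≤ ((n+2 : ℕ) : WithBot ℕ) := by
          have := hgn (n+2) (by omega)
          have h1 := wb1 _ _ this
          have h1' : (g (n+2)).degree + 1 ≤ ((n+1 : ℕ) : WithBot ℕ) := by simpa using h1
          calc (g (n+2)).degree + ((2:ℕ) : WithBot ℕ)
              = ((g (n+2)).degree + 1) + 1 := by
                rw [show ((2:ℕ):WithBot ℕ) = 1 + 1 by rfl, ← add_assoc]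
            _ ≤ ((n+1 : ℕ) : WithBot ℕ) + 1 := add_le_add_left h1' _
            _ = ((n+2 : ℕ) : WithBot ℕ) := by push_cast; ring
        have hc := hB (n+2) m
        have htot : (g (n+2) * PowerSeries.coeff (R := Polynomial ℂ) m ((PowerSeries.mk f) ^ (n+2))).degree
            + ((2:ℕ) : WithBot ℕ) ≤ (m : WithBot ℕ) := by
          calc (g (n+2) * PowerSeries.coeff (R := Polynomial ℂ) m ((PowerSeries.mk f) ^ (n+2))).degree
              + ((2:ℕ) : WithBot ℕ)
              ≤ ((g (n+2)).degree
                + (PowerSeries.coeff (R := Polynomial ℂ) m ((PowerSeries.mk f) ^ (n+2))).degree)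
                + ((2:ℕ) : WithBot ℕ) := add_le_add_left (degree_mul_le _ _) _
            _ = ((g (n+2)).degree + ((2:ℕ) : WithBot ℕ))
                + (PowerSeries.coeff (R := Polynomial ℂ) m ((PowerSeries.mk f) ^ (n+2))).degree := by
                abel
            _ ≤ ((n+2 : ℕ) : WithBot ℕ)
                + (PowerSeries.coeff (R := Polynomial ℂ) m ((PowerSeries.mk f) ^ (n+2))).degree :=
                add_le_add_left hg2 _
            _ = (PowerSeries.coeff (R := Polynomial ℂ) m ((PowerSeries.mk f) ^ (n+2))).degree
                + ((n+2 : ℕ) : WithBot ℕ) := by abel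
            _ ≤ (m : WithBot ℕ) := hc
        exact wb2 _ 2 m htot
    have hle : (compCoeff f g m).degree ≤ ((m - 2 : ℕ) : WithBot ℕ) := by
      refine (Polynomial.degree_sum_le _ _).trans ?_
      exact Finset.sup_le key
    refine hle.trans_lt ?_
    exact_mod_cast (by omega : m - 2 < m - 1)
end

section
/- Let f(a,z) = Σ_{n≥1} f_n(a) z^n and g(a,w) = Σ_{n≥1} g_n(a) w^n be formal power series over ℂ[a] with f_1, g_1 nonzero constants. If f is sub-quadratic and g is essentially quadratic, then the composition h(a,z) = g(a,f(a,z)) is essentially quadratic. -/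
open Polynomial

lemma wb_lt_iff {x : WithBot ℕ} {k : ℕ} (hk : 0 < k) :
    x < (k : WithBot ℕ) ↔ x ≤ ((k-1 : ℕ) : WithBot ℕ) := by
  cases x with
  | bot => exact iff_of_true (by exact_mod_cast WithBot.bot_lt_coe k) bot_le
  | coe a =>
    rw [Nat.cast_withBot, Nat.cast_withBot, WithBot.coe_lt_coe, WithBot.coe_le_coe]
    exact Nat.lt_iff_le_pred hk

lemma coeff_pow_eq_zero_of_lt (f : ℕ → Polynomial ℂ) (hf0 : f 0 = 0)
    {n i : ℕ} (h : i < n) :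
    PowerSeries.coeff (R := Polynomial ℂ) i ((PowerSeries.mk f) ^ n) = 0 := by
  have hX : (PowerSeries.X : PowerSeries (Polynomial ℂ)) ∣ PowerSeries.mk f := by
    rw [PowerSeries.X_dvd_iff]; simpa using hf0
  exact (PowerSeries.X_pow_dvd_iff.mp (pow_dvd_pow_of_dvd hX n)) i h

section

variable (f : ℕ → Polynomial ℂ) (hf0 : f 0 = 0) (c₁ : ℂ) (hf1 : f 1 = C c₁)
  (hfn : ∀ n : ℕ, 2 ≤ n → (f n).degree < ((n - 1 : ℕ) : WithBot ℕ))

include hf0 hf1 hfn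

lemma degf : ∀ j : ℕ, (f j).degree ≤ ((j - 1 : ℕ) : WithBot ℕ) := by
  intro j
  match j with
  | 0 => simp [hf0]
  | 1 => simpa [hf1] using degree_C_le
  | (k+2) => exact le_of_lt (hfn (k+2) (by omega))

lemma degA : ∀ n m : ℕ,
    (PowerSeries.coeff (R := Polynomial ℂ) m ((PowerSeries.mk f) ^ n)).degree
      ≤ ((m - n : ℕ) : WithBot ℕ) := by
  intro n
  induction n with
  | zero =>
    intro m
    rw [pow_zero, PowerSeries.coeff_one]
    split
    · subst ‹m = 0›; simp
    · simp
  | succ n IH =>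
    intro m
    rw [pow_succ, PowerSeries.coeff_mul]
    refine le_trans (degree_sum_le _ _) (Finset.sup_le ?_)
    intro p hp
    rw [Finset.HasAntidiagonal.mem_antidiagonal] at hp
    rcases Nat.lt_or_ge p.1 n with h1 | h1
    · rw [coeff_pow_eq_zero_of_lt f hf0 h1, zero_mul]; simp
    rcases Nat.eq_zero_or_pos p.2 with h2 | h2
    · rw [PowerSeries.coeff_mk, h2, hf0, mul_zero]; simp
    refine le_trans (degree_mul_le _ _) ?_
    rw [PowerSeries.coeff_mk]
    refine le_trans (add_le_add (IH p.1) (degf f hf0 c₁ hf1 hfn p.2)) ?_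
    rw [← Nat.cast_add]
    exact_mod_cast Nat.le_of_eq (by omega)

lemma degB : ∀ n m : ℕ, n < m →
    (PowerSeries.coeff (R := Polynomial ℂ) m ((PowerSeries.mk f) ^ n)).degree
      ≤ ((m - n - 1 : ℕ) : WithBot ℕ) := by
  intro n
  induction n with
  | zero =>
    intro m hm
    rw [pow_zero, PowerSeries.coeff_one, if_neg (by omega)]
    simp
  | succ n IH =>
    intro m hm
    rw [pow_succ, PowerSeries.coeff_mul]
    refine le_trans (degree_sum_le _ _) (Finset.sup_le ?_)
    intro p hp
    rw [Finset.HasAntidiagonal.mem_antidiagonal] at hp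
    rcases Nat.lt_or_ge p.1 n with h1 | h1
    · rw [coeff_pow_eq_zero_of_lt f hf0 h1, zero_mul]; simp
    rcases Nat.eq_zero_or_pos p.2 with h2 | h2
    · rw [PowerSeries.coeff_mk, h2, hf0, mul_zero]; simp
    refine le_trans (degree_mul_le _ _) ?_
    rw [PowerSeries.coeff_mk]
    rcases Nat.lt_or_ge p.2 2 with h3 | h3
    · -- p.2 = 1, so p.1 = m - 1 > n : use IH strict
      have hp2 : p.2 = 1 := by omega
      have hdeg1 : (f p.2).degree ≤ (0 : WithBot ℕ) := by
        rw [hp2, hf1]; exact degree_C_le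
      refine le_trans (add_le_add (IH p.1 (by omega)) hdeg1) ?_
      rw [add_zero]
      exact_mod_cast Nat.le_of_eq (by omega)
    · -- p.2 ≥ 2 : use strict bound on f and degA
      have hdeg2 : (f p.2).degree ≤ ((p.2 - 2 : ℕ) : WithBot ℕ) := by
        have := hfn p.2 h3
        rwa [wb_lt_iff (by omega), show p.2 - 1 - 1 = p.2 - 2 by omega] at this
      refine le_trans (add_le_add (degA f hf0 c₁ hf1 hfn n p.1) hdeg2) ?_
      rw [← Nat.cast_add]
      exact_mod_cast Nat.le_of_eq (by omega)

end

/-- If `f(a,z) = Σ_{n≥1} f_n(a) z^n` is sub-quadratic (`deg f_n < n-1` for `n ≥ 2`)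
and `g(a,w) = Σ_{n≥1} g_n(a) w^n` is essentially quadratic
(`deg g_2 = 1`, `deg g_n < n-1` for `n > 2`), with `f_1, g_1` nonzero constants,
then the composition is essentially quadratic.
`deg h_2 = 1` and `deg h_m < m-1` for `m > 2`. -/
theorem composition_essentially_quadratic_of_subquadratic_inner
    (f g : ℕ → Polynomial ℂ) (hf0 : f 0 = 0) (hg0 : g 0 = 0)
    (c₁ c₂ : ℂ) (hc₁ : c₁ ≠ 0) (hf1 : f 1 = C c₁)
    (hc₂ : c₂ ≠ 0) (hg1 : g 1 = C c₂)
    (hfn : ∀ n : ℕ, 2 ≤ n → (f n).degree < ((n - 1 : ℕ) : WithBot ℕ))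
    (hg2 : (g 2).degree = 1)
    (hgn : ∀ n : ℕ, 2 < n → (g n).degree < ((n - 1 : ℕ) : WithBot ℕ)) :
    (compCoeff f g 2).degree = 1 ∧
      ∀ m : ℕ, 2 < m → (compCoeff f g m).degree < ((m - 1 : ℕ) : WithBot ℕ) := by
  constructor
  · -- m = 2 case
    have hcoeff1 : PowerSeries.coeff (R := Polynomial ℂ) 2 ((PowerSeries.mk f) ^ 1) = f 2 := by
      rw [pow_one, PowerSeries.coeff_mk]
    have hcoeff2 : PowerSeries.coeff (R := Polynomial ℂ) 2 ((PowerSeries.mk f) ^ 2)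
        = C c₁ * C c₁ := by
      rw [sq, PowerSeries.coeff_mul]
      rw [Finset.Nat.sum_antidiagonal_eq_sum_range_succ_mk]
      simp [PowerSeries.coeff_mk, Finset.sum_range_succ, hf0, hf1]
    have hval : compCoeff f g 2 = C c₂ * f 2 + g 2 * (C c₁ * C c₁) := by
      rw [compCoeff]
      rw [Finset.sum_range_succ, Finset.sum_range_succ, Finset.sum_range_one]
      rw [hg0, hg1, hcoeff1, hcoeff2, zero_mul, zero_add]
    have hdeg2 : (g 2 * (C c₁ * C c₁)).degree = 1 := by
      rw [degree_mul, ← C_mul, degree_C (mul_ne_zero hc₁ hc₁), hg2, add_zero]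
    have hdeg1 : (C c₂ * f 2).degree < 1 := by
      refine lt_of_le_of_lt (degree_mul_le _ _) ?_
      have hf2 : (f 2).degree ≤ (0 : WithBot ℕ) := by
        have := hfn 2 le_rfl
        rwa [wb_lt_iff (by norm_num)] at this
      calc (C c₂).degree + (f 2).degree ≤ 0 + 0 := add_le_add degree_C_le hf2
        _ < 1 := by norm_num
    rw [hval, degree_add_eq_right_of_degree_lt (hdeg1.trans_eq hdeg2.symm), hdeg2]
  · intro m hm
    rw [wb_lt_iff (show 0 < m - 1 by omega)]
    rw [compCoeff]
    refine le_trans (degree_sum_le _ _) (Finset.sup_le ?_)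
    intro n hn
    rw [Finset.mem_range] at hn
    match n with
    | 0 => simp [hg0]
    | 1 =>
      rw [hg1, pow_one, PowerSeries.coeff_mk]
      refine le_trans (degree_mul_le _ _) ?_
      have hfm : (f m).degree ≤ ((m - 1 - 1 : ℕ) : WithBot ℕ) := by
        have := hfn m (by omega)
        rwa [wb_lt_iff (by omega)] at this
      calc (C c₂).degree + (f m).degree ≤ 0 + ((m - 1 - 1 : ℕ) : WithBot ℕ) :=
            add_le_add degree_C_le hfm
        _ = ((m - 1 - 1 : ℕ) : WithBot ℕ) := zero_add _
    | 2 =>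
      refine le_trans (degree_mul_le _ _) ?_
      have hB := degB f hf0 c₁ hf1 hfn 2 m hm
      refine le_trans (add_le_add hg2.le hB) ?_
      have : (1 : WithBot ℕ) = ((1 : ℕ) : WithBot ℕ) := by norm_cast
      rw [this, ← Nat.cast_add]
      exact_mod_cast Nat.le_of_eq (by omega)
    | (k+3) =>
      refine le_trans (degree_mul_le _ _) ?_
      have hgk : (g (k+3)).degree ≤ ((k + 3 - 2 : ℕ) : WithBot ℕ) := by
        have := hgn (k+3) (by omega)
        rwa [wb_lt_iff (by omega), show k + 3 - 1 - 1 = k + 3 - 2 by omega] at this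
      refine le_trans (add_le_add hgk (degA f hf0 c₁ hf1 hfn (k+3) m)) ?_
      rw [← Nat.cast_add]
      exact_mod_cast Nat.le_of_eq (by omega)
end

section
/- Let f : U → ℂ be holomorphic near a fixed point z₀ with f(z₀) = z₀ and |f'(z₀)| ∉ {0, 1}. Then f is linearizable at z₀: there exists a holomorphic map h defined near 0 with h(0) = z₀, h'(0) ≠ 0, and f(h(z)) = h(f'(z₀)·z) for z near 0. -/
open Filter Metric Set
open scoped Topology

/-- Local holomorphic inverse function: a function holomorphic near `a` with nonvanishing
derivative at `a` has a local inverse `g`, differentiable near `ψ a`. -/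
lemma holo_inverse (ψ : ℂ → ℂ) (a : ℂ) (s : Set ℂ) (hs : s ∈ 𝓝 a)
    (hψ : DifferentiableOn ℂ ψ s) (hd : deriv ψ a ≠ 0) :
    ∃ g : ℂ → ℂ, ∃ T ∈ 𝓝 (ψ a), ∃ W ∈ 𝓝 a,
      g (ψ a) = a ∧ HasDerivAt g (deriv ψ a)⁻¹ (ψ a) ∧
      (∀ y ∈ T, DifferentiableAt ℂ g y) ∧ (∀ y ∈ T, ψ (g y) = y) ∧
      (∀ x ∈ W, g (ψ x) = x) ∧ ContinuousAt g (ψ a) := by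
  have han : AnalyticAt ℂ ψ a := hψ.analyticAt hs
  obtain ⟨p, hp⟩ := han
  have hsd : HasStrictDerivAt ψ (deriv ψ a) a := by
    have h1 := hp.hasStrictDerivAt
    have h2 : deriv ψ a = p 1 fun _ => 1 := hp.hasDerivAt.deriv
    rwa [← h2] at h1
  set e : OpenPartialHomeomorph ℂ ℂ := HasStrictFDerivAt.toOpenPartialHomeomorph ψ (hsd.hasStrictFDerivAt_equiv hd) with he
  have hcoe : ⇑e = ψ := rfl
  have hasrc : a ∈ e.source := HasStrictFDerivAt.mem_toOpenPartialHomeomorph_source (hsd.hasStrictFDerivAt_equiv hd)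
  have hatgt : ψ a ∈ e.target := e.map_source hasrc
  have hsymm_a : e.symm (ψ a) = a := by
    rw [← hcoe]; exact e.left_inv hasrc
  -- good set where ψ is differentiable with nonvanishing derivative
  have hevd : ∀ᶠ x in 𝓝 a, DifferentiableAt ℂ ψ x := hψ.eventually_differentiableAt hs
  obtain ⟨t, hts, htop, hat⟩ := _root_.mem_nhds_iff.mp hs
  have hcont : ContinuousAt (deriv ψ) a :=
    (((hψ.mono hts).analyticOnNhd htop).deriv.continuousOn).continuousAt (htop.mem_nhds hat)
  have hevne : ∀ᶠ x in 𝓝 a, deriv ψ x ≠ 0 := hcont.eventually_ne hd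
  obtain ⟨A, hAsub, hAopen, haA⟩ := _root_.eventually_nhds_iff.mp (hevd.and hevne)
  set T : Set ℂ := e.target ∩ e.symm ⁻¹' A with hT_def
  have hTopen : IsOpen T := e.isOpen_inter_preimage_symm hAopen
  have hTmem : T ∈ 𝓝 (ψ a) := hTopen.mem_nhds ⟨hatgt, by simp [hsymm_a, haA]⟩
  have hright : ∀ y ∈ T, ψ (e.symm y) = y := fun y hy => by
    rw [← hcoe]; exact e.right_inv hy.1
  have hgcont : ∀ y ∈ e.target, ContinuousAt (⇑e.symm) y := fun y hy =>
    e.symm.continuousAt (by rwa [OpenPartialHomeomorph.symm_source])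
  have hdiffat : ∀ y ∈ T, DifferentiableAt ℂ (⇑e.symm) y := by
    intro y hy
    have hga : e.symm y ∈ A := hy.2
    have hda : HasDerivAt ψ (deriv ψ (e.symm y)) (e.symm y) := (hAsub _ hga).1.hasDerivAt
    have hloc : ∀ᶠ x in 𝓝 y, ψ (e.symm x) = x := by
      filter_upwards [hTopen.mem_nhds hy] with x hx using hright x hx
    exact (HasDerivAt.of_local_left_inverse (hgcont y hy.1) hda (hAsub _ hga).2 hloc).differentiableAt
  have hgda : HasDerivAt (⇑e.symm) (deriv ψ a)⁻¹ (ψ a) := by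
    have hda : HasDerivAt ψ (deriv ψ a) (e.symm (ψ a)) := by
      rw [hsymm_a]; exact hsd.hasDerivAt
    have hloc : ∀ᶠ x in 𝓝 (ψ a), ψ (e.symm x) = x := by
      filter_upwards [hTopen.mem_nhds (mem_of_mem_nhds hTmem)] with x hx using hright x hx
    exact HasDerivAt.of_local_left_inverse (hgcont _ hatgt) hda hd hloc
  exact ⟨⇑e.symm, T, hTmem, e.source, e.open_source.mem_nhds hasrc, hsymm_a, hgda, hdiffat,
    hright, fun x hx => by rw [← hcoe]; exact e.left_inv hx, hgcont _ hatgt⟩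


lemma koenigs_aux (b a R Mv : ℝ) (ha : a ≠ 0) (n : ℕ) :
    (b ^ n * R) ^ 2 * Mv / a ^ (n + 1) = (Mv * R ^ 2 / a) * (b ^ 2 / a) ^ n := by
  rw [div_pow, pow_succ]
  field_simp
  ring

/-- Koenigs linearization at an attracting fixed point, with control on the image of the
linearizing map. -/
lemma koenigs_attracting (f : ℂ → ℂ) (z₀ : ℂ) (U : Set ℂ) (hU : U ∈ 𝓝 z₀)
    (hf : DifferentiableOn ℂ f U) (hfix : f z₀ = z₀)
    (lam : ℂ) (hlam : deriv f z₀ = lam)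
    (hne : lam ≠ 0) (hlt : ‖lam‖ < 1)
    (V : Set ℂ) (hV : V ∈ 𝓝 z₀) :
    ∃ ε > (0 : ℝ), ∃ h : ℂ → ℂ,
      DifferentiableOn ℂ h (Metric.ball 0 ε) ∧ h 0 = z₀ ∧ deriv h 0 = 1 ∧
      (∀ z ∈ Metric.ball (0 : ℂ) ε, f (h z) = h (lam * z)) ∧
      (∀ z ∈ Metric.ball (0 : ℂ) ε, h z ∈ V) := by
  obtain ⟨p, hp⟩ : AnalyticAt ℂ f z₀ := hf.analyticAt hU
  set k : ℂ → ℂ := dslope (dslope f z₀) z₀ with hk_def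
  have hk_an : AnalyticAt ℂ k z₀ :=
    ⟨_, (hp.has_fpower_series_dslope_fslope).has_fpower_series_dslope_fslope⟩
  have hkc : ContinuousAt k z₀ := hk_an.continuousAt
  have key : ∀ z : ℂ, f z - z₀ = (z - z₀) * (lam + (z - z₀) * k z) := by
    intro z
    have h4 : dslope f z₀ z = lam + (z - z₀) * k z := by
      have h2 := sub_smul_dslope (dslope f z₀) z₀ z
      rw [smul_eq_mul, dslope_same, hlam, ← hk_def] at h2
      linear_combination -h2
    calc f z - z₀ = f z - f z₀ := by rw [hfix]
      _ = (z - z₀) • dslope f z₀ z := (sub_smul_dslope f z₀ z).symm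
      _ = (z - z₀) * (lam + (z - z₀) * k z) := by rw [smul_eq_mul, h4]
  set la := ‖lam‖ with hla_def
  have hla0 : 0 < la := by simpa [hla_def] using hne
  have hs0 : 0 < Real.sqrt la := Real.sqrt_pos.mpr hla0
  have hs1 : Real.sqrt la < 1 := by
    rw [show (1:ℝ) = Real.sqrt 1 by simp]
    exact Real.sqrt_lt_sqrt hla0.le hlt
  have hssq : Real.sqrt la ^ 2 = la := Real.sq_sqrt hla0.le
  have hlas : la < Real.sqrt la := by nlinarith
  set c : ℝ := (la + Real.sqrt la) / 2 with hc_def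
  have hlac : la < c := by simp only [hc_def]; linarith
  have hc0 : 0 < c := lt_trans hla0 hlac
  have hcs : c < Real.sqrt la := by simp only [hc_def]; linarith
  have hc1 : c < 1 := lt_trans hcs hs1
  have hcsq : c ^ 2 < la := by nlinarith
  set M : ℝ := ‖k z₀‖ + 1 with hM_def
  have hM0 : 0 < M := by positivity
  have hMev : ∀ᶠ z in 𝓝 z₀, ‖k z‖ ≤ M := by
    have h1 : Tendsto (fun z => ‖k z‖) (𝓝 z₀) (𝓝 (‖k z₀‖)) :=
      (continuous_norm.continuousAt.comp hkc)
    filter_upwards [h1.eventually_lt_const (show ‖k z₀‖ < M by rw [hM_def]; linarith)] with z hz using hz.le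
  obtain ⟨r₁, hr₁0, hr₁⟩ := Metric.nhds_basis_closedBall.mem_iff.mp
    (inter_mem hU hMev)
  set r : ℝ := min r₁ ((c - la) / M) with hr_def
  have hr0 : 0 < r := lt_min hr₁0 (div_pos (by linarith) hM0)
  have hrU : closedBall z₀ r ⊆ U := fun z hz =>
    (hr₁ (closedBall_subset_closedBall (min_le_left _ _) hz)).1
  have hrk : ∀ z ∈ closedBall z₀ r, ‖k z‖ ≤ M := fun z hz =>
    (hr₁ (closedBall_subset_closedBall (min_le_left _ _) hz)).2
  have hrc : r * M ≤ c - la := by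
    have : r ≤ (c - la) / M := min_le_right _ _
    rw [le_div_iff₀ hM0] at this
    linarith
  have hcontr : ∀ z ∈ closedBall z₀ r, ‖f z - z₀‖ ≤ c * ‖z - z₀‖ := by
    intro z hz
    have hzr : ‖z - z₀‖ ≤ r := by rwa [Metric.mem_closedBall, Complex.dist_eq] at hz
    rw [key z, norm_mul]
    have hb : ‖lam + (z - z₀) * k z‖ ≤ c := by
      calc ‖lam + (z - z₀) * k z‖
          ≤ la + ‖z - z₀‖ * ‖k z‖ := by
            rw [← norm_mul]; exact (norm_add_le _ _).trans (by rw [hla_def])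
        _ ≤ la + r * M := by
            have := mul_le_mul hzr (hrk z hz) (norm_nonneg _) hr0.le
            linarith
        _ ≤ c := by linarith
    calc ‖z - z₀‖ * ‖lam + (z - z₀) * k z‖
        ≤ ‖z - z₀‖ * c := mul_le_mul_of_nonneg_left hb (norm_nonneg _)
      _ = c * ‖z - z₀‖ := mul_comm _ _
  have hmaps : ∀ z ∈ closedBall z₀ r, f z ∈ closedBall z₀ r := by
    intro z hz
    have hzr : ‖z - z₀‖ ≤ r := by rwa [Metric.mem_closedBall, Complex.dist_eq] at hz
    rw [Metric.mem_closedBall, Complex.dist_eq]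
    calc ‖f z - z₀‖ ≤ c * ‖z - z₀‖ := hcontr z hz
      _ ≤ 1 * r := by nlinarith
      _ = r := one_mul r
  have hiter : ∀ n : ℕ, ∀ z ∈ closedBall z₀ r,
      f^[n] z ∈ closedBall z₀ r ∧ ‖f^[n] z - z₀‖ ≤ c ^ n * ‖z - z₀‖ := by
    intro n
    induction n with
    | zero => intro z hz; exact ⟨by simpa using hz, by simp⟩
    | succ n ih =>
      intro z hz
      obtain ⟨hmem, hbd⟩ := ih z hz
      rw [Function.iterate_succ_apply']
      refine ⟨hmaps _ hmem, ?_⟩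
      calc ‖f (f^[n] z) - z₀‖ ≤ c * ‖f^[n] z - z₀‖ := hcontr _ hmem
        _ ≤ c * (c ^ n * ‖z - z₀‖) := mul_le_mul_of_nonneg_left hbd hc0.le
        _ = c ^ (n + 1) * ‖z - z₀‖ := by ring
  have hiterdiff : ∀ n : ℕ, DifferentiableOn ℂ (f^[n]) (closedBall z₀ r) := by
    intro n
    induction n with
    | zero => simpa using differentiableOn_id
    | succ n ih =>
      rw [Function.iterate_succ']
      exact (hf.mono hrU).comp ih (fun z hz => (hiter n z hz).1)
  set φ : ℕ → ℂ → ℂ := fun n z => (f^[n] z - z₀) / lam ^ n with hφ_def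
  have hlampow : ∀ n : ℕ, lam ^ n ≠ 0 := fun n => pow_ne_zero n hne
  set dd : ℕ → ℂ → ℂ := fun n z => φ (n + 1) z - φ n z with hdd_def
  have hddbd : ∀ (n : ℕ) (z : ℂ), z ∈ closedBall z₀ r →
      ‖dd n z‖ ≤ (M * r ^ 2 / la) * (c ^ 2 / la) ^ n := by
    intro n z hz
    obtain ⟨hmem, hbd⟩ := hiter n z hz
    have hzr : ‖z - z₀‖ ≤ r := by rwa [Metric.mem_closedBall, Complex.dist_eq] at hz
    set w := f^[n] z with hw_def
    have hw : ‖w - z₀‖ ≤ c ^ n * r := by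
      refine hbd.trans ?_
      exact mul_le_mul_of_nonneg_left hzr (pow_nonneg hc0.le n)
    have heq : dd n z = (w - z₀) ^ 2 * k w / lam ^ (n + 1) := by
      have h5 : f^[n + 1] z = f w := Function.iterate_succ_apply' f n z
      have h6 := key w
      simp only [hdd_def, hφ_def, h5]
      rw [h6]
      field_simp
      ring
    rw [heq]
    have hnorm : ‖(w - z₀) ^ 2 * k w / lam ^ (n + 1)‖
        = ‖w - z₀‖ ^ 2 * ‖k w‖ / la ^ (n + 1) := by
      simp [norm_div, norm_mul, norm_pow, hla_def]
    rw [hnorm]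
    have hlapow : (0:ℝ) < la ^ (n + 1) := pow_pos hla0 _
    calc ‖w - z₀‖ ^ 2 * ‖k w‖ / la ^ (n + 1)
        ≤ (c ^ n * r) ^ 2 * M / la ^ (n + 1) := by
          have h7 : ‖w - z₀‖ ^ 2 * ‖k w‖ ≤ (c ^ n * r) ^ 2 * M := by
            have h8 := pow_le_pow_left₀ (norm_nonneg _) hw 2
            exact mul_le_mul h8 (hrk w hmem) (norm_nonneg _) (by positivity)
          exact (div_le_div_iff_of_pos_right hlapow).mpr h7
      _ = (M * r ^ 2 / la) * (c ^ 2 / la) ^ n :=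
          koenigs_aux c la r M (ne_of_gt hla0) n
  set q : ℝ := c ^ 2 / la with hq_def
  have hq0 : 0 ≤ q := by positivity
  have hq1 : q < 1 := (div_lt_one hla0).mpr hcsq
  have hsum : Summable (fun n : ℕ => (M * r ^ 2 / la) * q ^ n) :=
    (summable_geometric_of_lt_one hq0 hq1).mul_left _
  set ψ : ℂ → ℂ := fun z => (z - z₀) + ∑' n, dd n z with hψ_def
  have htu0 := tendstoUniformlyOn_tsum_nat hsum hddbd
  have hφeq : ∀ (N : ℕ) (z : ℂ), φ N z = (z - z₀) + ∑ n ∈ Finset.range N, dd n z := by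
    intro N z
    have h1 : ∑ n ∈ Finset.range N, dd n z = φ N z - φ 0 z :=
      Finset.sum_range_sub (fun n => φ n z) N
    have h2 : φ 0 z = z - z₀ := by simp [hφ_def]
    rw [h1, h2]; ring
  have htu : TendstoUniformlyOn φ ψ atTop (closedBall z₀ r) := by
    rw [Metric.tendstoUniformlyOn_iff] at htu0 ⊢
    intro ε hε
    filter_upwards [htu0 ε hε] with N hN z hz
    have := hN z hz
    simpa [hψ_def, hφeq N z, dist_add_left] using this
  have hpt : ∀ z ∈ closedBall z₀ r, Tendsto (fun n => φ n z) atTop (𝓝 (ψ z)) :=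
    fun z hz => htu.tendsto_at hz
  have hψ0 : ψ z₀ = 0 := by
    have hφz₀ : ∀ n : ℕ, φ n z₀ = 0 := by
      intro n; simp [hφ_def, Function.iterate_fixed hfix]
    have h1 := hpt z₀ (mem_closedBall_self hr0.le)
    simp only [hφz₀] at h1
    exact (tendsto_nhds_unique h1 tendsto_const_nhds)
  have hφdiff : ∀ n : ℕ, DifferentiableOn ℂ (φ n) (ball z₀ r) := by
    intro n
    exact (((hiterdiff n).mono ball_subset_closedBall).sub
      (differentiableOn_const _)).div_const _
  have htlu : TendstoLocallyUniformlyOn φ ψ atTop (ball z₀ r) :=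
    htu.tendstoLocallyUniformlyOn.mono ball_subset_closedBall
  have hψdiff : DifferentiableOn ℂ ψ (ball z₀ r) :=
    htlu.differentiableOn (Eventually.of_forall hφdiff) isOpen_ball
  have hdconv := htlu.deriv (Eventually.of_forall hφdiff) isOpen_ball
  have hz₀ball : z₀ ∈ ball z₀ r := mem_ball_self hr0
  have hfd : HasDerivAt f lam z₀ := by
    have h1 := (hf.differentiableAt hU).hasDerivAt; rwa [hlam] at h1
  have hφd : ∀ n : ℕ, deriv (φ n) z₀ = 1 := by
    intro n
    have hdi : HasDerivAt (f^[n]) (lam ^ n) z₀ := by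
      induction n with
      | zero => simpa using hasDerivAt_id z₀
      | succ n ih =>
        have hfd' : HasDerivAt f lam (f^[n] z₀) := by
          rwa [Function.iterate_fixed hfix n]
        have h1 : HasDerivAt (f ∘ f^[n]) (lam * lam ^ n) z₀ := HasDerivAt.comp z₀ hfd' ih
        rw [← Function.iterate_succ' f n] at h1
        have : lam * lam ^ n = lam ^ (n + 1) := by ring
        rwa [this] at h1
    have h2 : HasDerivAt (φ n) (lam ^ n / lam ^ n) z₀ := (hdi.sub_const z₀).div_const _
    rw [div_self (hlampow n)] at h2
    exact h2.deriv
  have hψd1 : deriv ψ z₀ = 1 := by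
    have h2 := hdconv.tendsto_at hz₀ball
    simp only [Function.comp, hφd] at h2
    exact tendsto_nhds_unique h2 tendsto_const_nhds
  have hfe : ∀ z ∈ closedBall z₀ r, ψ (f z) = lam * ψ z := by
    intro z hz
    have hfz : f z ∈ closedBall z₀ r := hmaps z hz
    have h1 : Tendsto (fun n => φ n (f z)) atTop (𝓝 (ψ (f z))) := hpt _ hfz
    have h2 : ∀ n : ℕ, lam * φ (n + 1) z = φ n (f z) := by
      intro n
      simp only [hφ_def]
      rw [← Function.iterate_succ_apply f n z, pow_succ]
      field_simp
    have h3 : Tendsto (fun n => lam * φ (n + 1) z) atTop (𝓝 (lam * ψ z)) :=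
      ((hpt z hz).comp (tendsto_add_atTop_nat 1)).const_mul lam
    exact tendsto_nhds_unique h1 (h3.congr h2)
  have hψd_ne : deriv ψ z₀ ≠ 0 := by rw [hψd1]; exact one_ne_zero
  obtain ⟨g, T, hT, W, hW, hg0, hgd, hgdiff, hgright, hgleft, hgc⟩ :=
    holo_inverse ψ z₀ (ball z₀ r) (ball_mem_nhds z₀ hr0) hψdiff hψd_ne
  rw [hψ0] at hT hg0 hgd hgc
  rw [hψd1, inv_one] at hgd
  have hfc : ContinuousAt f z₀ := (hf.differentiableAt hU).continuousAt
  have hNf : f ⁻¹' W ∈ 𝓝 z₀ := hfc.preimage_mem_nhds (by rwa [hfix])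
  have hN : closedBall z₀ r ∩ (f ⁻¹' W ∩ V) ∈ 𝓝 z₀ :=
    inter_mem (closedBall_mem_nhds z₀ hr0) (inter_mem hNf hV)
  have hgN : g ⁻¹' (closedBall z₀ r ∩ (f ⁻¹' W ∩ V)) ∈ 𝓝 (0:ℂ) :=
    hgc.preimage_mem_nhds (by rwa [hg0])
  obtain ⟨ε, hε0, hεsub⟩ := Metric.mem_nhds_iff.mp (inter_mem hT hgN)
  refine ⟨ε, hε0, g, ?_, hg0, hgd.deriv, ?_, ?_⟩
  · exact fun y hy => (hgdiff y (hεsub hy).1).differentiableWithinAt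
  · intro z hz
    obtain ⟨hzT, hzN⟩ := hεsub hz
    have hx1 : g z ∈ closedBall z₀ r := hzN.1
    have hψx : ψ (g z) = z := hgright z hzT
    have h1 : ψ (f (g z)) = lam * z := by rw [hfe _ hx1, hψx]
    have h2 : g (ψ (f (g z))) = f (g z) := hgleft _ hzN.2.1
    rw [h1] at h2
    exact h2.symm
  · exact fun z hz => (hεsub hz).2.2.2

/-- Koenigs's linearization theorem: a holomorphic map `f` near a fixed point `z₀`
with multiplier `λ = f'(z₀)` satisfying `|λ| ∉ {0,1}` (attracting or repelling) is
linearizable: there is a holomorphic `h` near `0` with `h(0) = z₀`, `h'(0) ≠ 0`, and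
`f(h(z)) = h(λ z)` for `z` near `0`. -/
theorem koenigs_linearization
    (f : ℂ → ℂ) (z₀ : ℂ) (U : Set ℂ) (hU : U ∈ nhds z₀)
    (hf : DifferentiableOn ℂ f U) (hfix : f z₀ = z₀)
    (hl0 : ‖deriv f z₀‖ ≠ 0) (hl1 : ‖deriv f z₀‖ ≠ 1) :
    ∃ ε > (0 : ℝ), ∃ h : ℂ → ℂ,
      DifferentiableOn ℂ h (Metric.ball 0 ε) ∧ h 0 = z₀ ∧ deriv h 0 ≠ 0 ∧
      ∀ z ∈ Metric.ball (0 : ℂ) ε, f (h z) = h (deriv f z₀ * z) := by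
  set lam := deriv f z₀ with hlam_def
  have hne : lam ≠ 0 := by
    intro h; rw [h] at hl0; simp at hl0
  rcases lt_or_gt_of_ne hl1 with hlt | hgt
  · -- attracting case
    obtain ⟨ε, hε0, h, hdiff, hh0, hhd, hheq, -⟩ :=
      koenigs_attracting f z₀ U hU hf hfix lam rfl hne hlt univ univ_mem
    exact ⟨ε, hε0, h, hdiff, hh0, by rw [hhd]; exact one_ne_zero, hheq⟩
  · -- repelling case: apply the attracting case to a local inverse of f
    have hfd' : deriv f z₀ ≠ 0 := hne
    obtain ⟨g, T, hT, W, hW, hg0, hgd, hgdiff, hgright, hgleft, hgc⟩ :=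
      holo_inverse f z₀ U hU hf hfd'
    rw [hfix] at hT hg0 hgd hgc
    have hgdiffOn : DifferentiableOn ℂ g T :=
      fun y hy => (hgdiff y hy).differentiableWithinAt
    have hgderiv : deriv g z₀ = lam⁻¹ := hgd.deriv
    have hinvne : lam⁻¹ ≠ 0 := inv_ne_zero hne
    have hinvlt : ‖lam⁻¹‖ < 1 := by
      rw [norm_inv]
      exact inv_lt_one_of_one_lt₀ hgt
    obtain ⟨ε₁, hε₁0, h, hhdiff, hh0, hhd, hheq, hhT⟩ :=
      koenigs_attracting g z₀ T hT hgdiffOn hg0 lam⁻¹ hgderiv hinvne hinvlt T hT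
    have habs0 : (0:ℝ) < ‖lam‖ := norm_pos_iff.mpr hne
    refine ⟨ε₁ / ‖lam‖, by positivity, h, ?_, hh0,
      by rw [hhd]; exact one_ne_zero, ?_⟩
    · refine hhdiff.mono (ball_subset_ball ?_)
      rw [div_le_iff₀ habs0]
      nlinarith
    · intro w hw
      have h1 : lam * w ∈ ball (0:ℂ) ε₁ := by
        rw [mem_ball_zero_iff] at hw ⊢
        rw [norm_mul]
        calc ‖lam‖ * ‖w‖ < ‖lam‖ * (ε₁ / ‖lam‖) := by
              exact mul_lt_mul_of_pos_left hw (by simpa using habs0)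
          _ = ε₁ := by
              field_simp
      have h2 := hheq (lam * w) h1
      have h3 : lam⁻¹ * (lam * w) = w := by field_simp
      rw [h3] at h2
      have h5 := hgright _ (hhT _ h1)
      rw [h2] at h5
      exact h5
end
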